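/- arXiv:1908.05589 — 5 statements merged into one kernel-verified Lean document; each statement's English description precedes it below -/
import Mathlib

section
/- Let P : ℝ → ℝ be a polynomial of degree m, let I ⊂ ℝ be a bounded interval of positive length, and let t ∈ ℝ. Then |P(t)| ≤ (8 m · max{|I|, dist(t, I)} / |I|)^m · (1/|I|) · ∫_I |P(t')| dt'. -/
open MeasureTheory Polynomial Finset

lemma lagrange_abs_bound {s : Finset ℕ} {v : ℕ → ℝ} (hv : Set.InjOn v s)
    (P : Polynomial ℝ) (hP : P.degree < s.card) (t : ℝ) :
    |P.eval t| ≤ ∑ i ∈ s, |P.eval (v i)| * ∏ j ∈ s.erase i, (|t - v j| / |v i - v j|) := by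
  conv_lhs => rw [Lagrange.eq_interpolate hv hP]
  rw [Lagrange.interpolate_apply, eval_finset_sum]
  refine (Finset.abs_sum_le_sum_abs _ _).trans ?_
  refine Finset.sum_le_sum fun i hi => ?_
  rw [eval_mul, eval_C, abs_mul]
  refine mul_le_mul_of_nonneg_left (le_of_eq ?_) (abs_nonneg _)
  rw [Lagrange.basis, eval_prod, Finset.abs_prod]
  refine Finset.prod_congr rfl fun j hj => ?_
  rw [Lagrange.basisDivisor, eval_mul, eval_C, eval_sub, eval_X, eval_C, abs_mul, abs_inv]
  rw [div_eq_mul_inv, mul_comm]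

lemma prod_abs_sub_nodes (m j : ℕ) (hj : j ≤ m) :
    ∏ k ∈ (Finset.range (m+1)).erase j, |(j:ℝ) - (k:ℝ)| = (Nat.factorial j) * (Nat.factorial (m-j)) := by
  have hsplit : (Finset.range (m+1)).erase j = Finset.range j ∪ Finset.Ico (j+1) (m+1) := by
    ext k
    simp only [Finset.mem_erase, Finset.mem_range, Finset.mem_union, Finset.mem_Ico]
    omega
  have hdisj : Disjoint (Finset.range j) (Finset.Ico (j+1) (m+1)) := by
    rw [Finset.disjoint_left]
    intro k hk hk'
    simp only [Finset.mem_range] at hk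
    simp only [Finset.mem_Ico] at hk'
    omega
  rw [hsplit, Finset.prod_union hdisj]
  congr 1
  · have : ∀ k ∈ Finset.range j, |(j:ℝ) - (k:ℝ)| = ((j - k : ℕ) : ℝ) := by
      intro k hk
      simp only [Finset.mem_range] at hk
      rw [Nat.cast_sub hk.le, abs_of_nonneg]
      have : (k:ℝ) < j := by exact_mod_cast hk
      linarith
    rw [Finset.prod_congr rfl this, ← Nat.cast_prod]
    norm_cast
    rw [← Finset.prod_range_reflect (fun k => j - k) j]
    have : ∀ k ∈ Finset.range j, j - (j - 1 - k) = k + 1 := by intro k hk; simp at hk; omega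
    rw [Finset.prod_congr rfl this, Finset.prod_range_add_one_eq_factorial]
  · have : ∀ k ∈ Finset.Ico (j+1) (m+1), |(j:ℝ) - (k:ℝ)| = ((k - j : ℕ) : ℝ) := by
      intro k hk
      simp only [Finset.mem_Ico] at hk
      rw [Nat.cast_sub (by omega), abs_of_nonpos]
      · ring
      · have : (j:ℝ) < k := by exact_mod_cast hk.1
        linarith
    rw [Finset.prod_congr rfl this, ← Nat.cast_prod]
    norm_cast
    rw [Finset.prod_Ico_eq_prod_range]
    have : ∀ k ∈ Finset.range (m+1-(j+1)), (j + 1 + k) - j = k + 1 := by intro k hk; omega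
    rw [Finset.prod_congr rfl this, Finset.prod_range_add_one_eq_factorial]
    congr 1
    omega

lemma abs_sub_le_infDist_add (a b t x : ℝ) (hab : a ≤ b) (hx : x ∈ Set.Icc a b) :
    |t - x| ≤ Metric.infDist t (Set.Icc a b) + (b - a) := by
  have := Metric.dist_le_infDist_add_diam (s := Set.Icc a b) (Metric.isBounded_Icc a b) hx (x := t)
  rwa [Real.diam_Icc hab, Real.dist_eq] at this

lemma abs_sub_mid_le {a b t : ℝ} (hab : a ≤ b) :
    |t - (a+b)/2| ≤ Metric.infDist t (Set.Icc a b) + (b-a)/2 := by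
  have hne : (Set.Icc a b).Nonempty := Set.nonempty_Icc.mpr hab
  have h0 : 0 ≤ Metric.infDist t (Set.Icc a b) := Metric.infDist_nonneg
  rcases le_or_gt t b with htb | htb
  · rcases le_or_gt a t with hat | hat
    · rw [abs_le]; constructor <;> [linarith; linarith]
    · -- t < a
      have key : a - t ≤ Metric.infDist t (Set.Icc a b) := by
        by_contra h
        push_neg at h
        obtain ⟨y, hy, hd⟩ := (Metric.infDist_lt_iff hne).mp h
        rw [Real.dist_eq] at hd
        have : a ≤ y := hy.1
        have : a - t ≤ |t - y| := by
          rw [abs_sub_comm, abs_of_nonneg (by linarith)]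
          linarith
        linarith
      rw [abs_of_nonpos (by linarith)]
      linarith
  · have key : t - b ≤ Metric.infDist t (Set.Icc a b) := by
      by_contra h
      push_neg at h
      obtain ⟨y, hy, hd⟩ := (Metric.infDist_lt_iff hne).mp h
      rw [Real.dist_eq] at hd
      have : y ≤ b := hy.2
      have : t - b ≤ |t - y| := by
        rw [abs_of_nonneg (by linarith)]
        linarith
      linarith
    rw [abs_of_nonneg (by linarith)]
    linarith

lemma integral_quadratic (c0 c1 c2 c d : ℝ) :
    ∫ x in c..d, (c0 + c1*x + c2*x^2) = c0*(d-c) + c1*(d^2-c^2)/2 + c2*(d^3-c^3)/3 := by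
  have i1 : IntervalIntegrable (fun _ : ℝ => c0) volume c d :=
    intervalIntegrable_const
  have i2 : IntervalIntegrable (fun x : ℝ => c1*x) volume c d :=
    (continuous_const.mul continuous_id).intervalIntegrable _ _
  have i3 : IntervalIntegrable (fun x : ℝ => c2*x^2) volume c d :=
    (continuous_const.mul (continuous_pow 2)).intervalIntegrable _ _
  rw [show (fun x : ℝ => c0 + c1*x + c2*x^2)
      = fun x : ℝ => ((c0 + c1*x) + c2*x^2) from rfl]
  rw [intervalIntegral.integral_add (i1.add i2) i3, intervalIntegral.integral_add i1 i2]
  rw [intervalIntegral.integral_const, intervalIntegral.integral_const_mul,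
    intervalIntegral.integral_const_mul, integral_id, integral_pow]
  push_cast
  rw [smul_eq_mul]
  ring

lemma g_bound : ∀ m : ℕ, 3 ≤ m → ((11:ℝ)/14)^m * (11*m/3) ≤ Nat.factorial m := by
  intro m hm
  induction m with
  | zero => omega
  | succ n ih =>
    rcases Nat.lt_or_ge n 3 with hn | hn
    · interval_cases n
      · omega
      · omega
      · norm_num [Nat.factorial]
    · have h1 := ih (by omega)
      have hn3 : (3:ℝ) ≤ n := by exact_mod_cast hn
      have hfac : (Nat.factorial (n+1) : ℝ) = (n+1) * Nat.factorial n := by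
        rw [Nat.factorial_succ]; push_cast; ring
      rw [hfac]
      have hnpos : (0:ℝ) < n := by linarith
      have hstep : ((11:ℝ)/14)^(n+1) * (11*(n+1)/3)
          = ((11:ℝ)/14)^n * (11*n/3) * ((11/14) * ((n+1)/n)) := by
        rw [pow_succ]
        field_simp
      push_cast
      rw [hstep]
      have h2 : ((11:ℝ)/14) * ((n+1)/n) ≤ (n+1) := by
        rw [div_mul_div_comm, div_le_iff₀ (by positivity)]
        nlinarith
      have hg0 : (0:ℝ) ≤ ((11:ℝ)/14)^n * (11*n/3) := by positivity
      calc ((11:ℝ)/14)^n * (11*n/3) * ((11/14) * ((n+1)/n))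
          ≤ (Nat.factorial n : ℝ) * (n+1) := by
            apply mul_le_mul h1 h2 (by positivity) (Nat.cast_nonneg _)
        _ = (n+1) * Nat.factorial n := by ring

lemma key_numeric (m : ℕ) (hm : 3 ≤ m) :
    ((10*m+3 : ℝ)/(14*m))^m * ((10*m+3)/3) ≤ Nat.factorial m := by
  have hm3 : (3:ℝ) ≤ m := by exact_mod_cast hm
  have h1 : ((10*m+3 : ℝ)/(14*m)) ≤ 11/14 := by
    rw [div_le_div_iff₀ (by linarith) (by norm_num)]
    nlinarith
  have h0 : (0:ℝ) ≤ (10*m+3)/(14*m) := by positivity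
  calc ((10*m+3 : ℝ)/(14*m))^m * ((10*m+3)/3)
      ≤ ((11:ℝ)/14)^m * (11*m/3) := by
        apply mul_le_mul (pow_le_pow_left₀ h0 h1 m) (by nlinarith) (by positivity) (by positivity)
    _ ≤ Nat.factorial m := g_bound m hm

lemma main_eq0 (P : Polynomial ℝ) (hdeg : P.natDegree = 0) (a b : ℝ) (hab : a < b) (t : ℝ) :
    |P.eval t| ≤ (1/(b-a)) * ∫ t' in a..b, |P.eval t'| := by
  have hba : (0:ℝ) < b - a := by linarith
  obtain ⟨c, rfl⟩ := Polynomial.natDegree_eq_zero.mp hdeg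
  simp only [Polynomial.eval_C]
  rw [intervalIntegral.integral_const, smul_eq_mul]
  rw [one_div, inv_mul_cancel_left₀ (by positivity)]

set_option maxHeartbeats 2000000 in
lemma main_eq1 (P : Polynomial ℝ) (hdeg : P.natDegree ≤ 1) (a b : ℝ) (hab : a < b) (t : ℝ) :
    |P.eval t| ≤
      (8 * 1 * max (b - a) (Metric.infDist t (Set.Icc a b)) / (b - a)) ^ 1 *
        ((1 / (b - a)) * ∫ t' in a..b, |P.eval t'|) := by
  have hba : (0:ℝ) < b - a := by linarith
  set M : ℝ := max (b - a) (Metric.infDist t (Set.Icc a b)) with hM_def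
  have hbaM : b - a ≤ M := le_max_left _ _
  have hdM : Metric.infDist t (Set.Icc a b) ≤ M := le_max_right _ _
  have hM : 0 < M := lt_of_lt_of_le hba hbaM
  set c0 : ℝ := P.coeff 0 with hc0
  set c1 : ℝ := P.coeff 1 with hc1
  have heval : ∀ x : ℝ, P.eval x = c0 + c1*x + 0*x^2 := by
    intro x
    rw [Polynomial.eval_eq_sum_range' (Nat.lt_succ_of_le hdeg)]
    simp [Finset.sum_range_succ]
    rfl
  have hfun : (fun x : ℝ => P.eval x) = fun x : ℝ => c0 + c1*x + 0*x^2 := funext heval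
  set μ : ℝ := (a+b)/2 with hμ
  set h : ℝ := (b-a)/2 with hh
  have hhpos : 0 < h := by rw [hh]; linarith
  have haμ : a ≤ μ := by rw [hμ]; linarith
  have hμb : μ ≤ b := by rw [hμ]; linarith
  set α : ℝ := c0 + c1*μ with hα
  -- the two half integrals
  have hV1 : ∫ x in a..μ, P.eval x = h * (α - c1*h/2) := by
    rw [hfun, integral_quadratic, hα, hμ, hh]; ring
  have hV2 : ∫ x in μ..b, P.eval x = h * (α + c1*h/2) := by
    rw [hfun, integral_quadratic, hα, hμ, hh]; ring
  have hcont : Continuous fun x : ℝ => |P.eval x| := P.continuous.abs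
  set J : ℝ := ∫ t' in a..b, |P.eval t'| with hJ
  have hJsplit : (∫ x in a..μ, |P.eval x|) + (∫ x in μ..b, |P.eval x|) = J := by
    rw [hJ]
    exact intervalIntegral.integral_add_adjacent_intervals
      (hcont.intervalIntegrable _ _) (hcont.intervalIntegrable _ _)
  have k1 : h * |α - c1*h/2| ≤ ∫ x in a..μ, |P.eval x| := by
    have := intervalIntegral.abs_integral_le_integral_abs (μ := volume)
      (f := fun x => P.eval x) haμ
    rw [hV1, abs_mul, abs_of_pos hhpos] at this
    exact this
  have k2 : h * |α + c1*h/2| ≤ ∫ x in μ..b, |P.eval x| := by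
    have := intervalIntegral.abs_integral_le_integral_abs (μ := volume)
      (f := fun x => P.eval x) hμb
    rw [hV2, abs_mul, abs_of_pos hhpos] at this
    exact this
  have hXY : h * (|α - c1*h/2| + |α + c1*h/2|) ≤ J := by
    rw [mul_add]; linarith
  have hαb : |α| ≤ (|α - c1*h/2| + |α + c1*h/2|)/2 := by
    have h1 : |(α - c1*h/2) + (α + c1*h/2)| ≤ |α - c1*h/2| + |α + c1*h/2| :=
      abs_add_le _ _
    have e : (α - c1*h/2) + (α + c1*h/2) = 2*α := by ring
    rw [e, abs_mul, abs_of_nonneg (by norm_num : (0:ℝ) ≤ 2)] at h1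
    linarith
  have hβb : |c1| * h ≤ |α - c1*h/2| + |α + c1*h/2| := by
    have h1 : |(α + c1*h/2) - (α - c1*h/2)| ≤ |α + c1*h/2| + |α - c1*h/2| :=
      abs_sub _ _
    have e : (α + c1*h/2) - (α - c1*h/2) = c1 * h := by ring
    rw [e, abs_mul, abs_of_pos hhpos] at h1
    linarith
  have hτ : |t - μ| ≤ M + h := by
    have := abs_sub_mid_le (t := t) hab.le
    rw [← hμ, ← hh] at this
    linarith
  have hτ0 : 0 ≤ |t - μ| := abs_nonneg _
  have hJ0 : 0 ≤ J := by
    rw [hJ]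
    exact intervalIntegral.integral_nonneg hab.le (fun x _ => abs_nonneg _)
  have hPt : |P.eval t| ≤ |α| + |c1| * |t - μ| := by
    have e : P.eval t = α + c1 * (t - μ) := by rw [heval t, hα]; ring
    rw [e]
    refine (abs_add_le _ _).trans ?_
    rw [abs_mul]
  have hβτ : |c1| * |t - μ| ≤ |c1| * (M + h) :=
    mul_le_mul_of_nonneg_left hτ (abs_nonneg _)
  -- final arithmetic
  have hgoal : |α| + |c1| * (M + h) ≤ (8 * 1 * M / (b-a)) ^ 1 * ((1/(b-a)) * J) := by
    have hα3 : |α| * (2*h) ≤ J := by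
      have h1 : (2*|α|) * h ≤ (|α - c1*h/2| + |α + c1*h/2|) * h :=
        mul_le_mul_of_nonneg_right (by linarith) hhpos.le
      nlinarith [hXY]
    have hβ3 : |c1| * (h*h) ≤ J := by
      have h1 : (|c1| * h) * h ≤ (|α - c1*h/2| + |α + c1*h/2|) * h :=
        mul_le_mul_of_nonneg_right hβb hhpos.le
      nlinarith [hXY]
    have hb2h : b - a = 2*h := by rw [hh]; ring
    rw [pow_one, hb2h]
    have hMh : 2*h ≤ M := by rw [← hb2h]; exact hbaM
    have expand : 8 * 1 * M / (2 * h) * (1 / (2 * h) * J) = 2*(M*J)/(h*h) := by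
      field_simp
      ring
    rw [expand, le_div_iff₀ (by positivity : (0:ℝ) < h*h)]
    nlinarith [mul_le_mul_of_nonneg_right hα3 hhpos.le,
      mul_le_mul_of_nonneg_right hβ3 (by positivity : (0:ℝ) ≤ M + h),
      mul_nonneg hJ0 (by linarith : (0:ℝ) ≤ M - 2*h),
      abs_nonneg c1, abs_nonneg α, hhpos.le, hJ0]
  calc |P.eval t| ≤ |α| + |c1| * |t - μ| := hPt
    _ ≤ |α| + |c1| * (M + h) := by linarith
    _ ≤ _ := hgoal

set_option maxHeartbeats 2000000 in
lemma main_eq2 (P : Polynomial ℝ) (hdeg : P.natDegree ≤ 2) (a b : ℝ) (hab : a < b) (t : ℝ) :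
    |P.eval t| ≤
      (8 * 2 * max (b - a) (Metric.infDist t (Set.Icc a b)) / (b - a)) ^ 2 *
        ((1 / (b - a)) * ∫ t' in a..b, |P.eval t'|) := by
  have hba : (0:ℝ) < b - a := by linarith
  set M : ℝ := max (b - a) (Metric.infDist t (Set.Icc a b)) with hM_def
  have hbaM : b - a ≤ M := le_max_left _ _
  have hdM : Metric.infDist t (Set.Icc a b) ≤ M := le_max_right _ _
  have hM : 0 < M := lt_of_lt_of_le hba hbaM
  set c0 : ℝ := P.coeff 0 with hc0
  set c1 : ℝ := P.coeff 1 with hc1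
  set c2 : ℝ := P.coeff 2 with hc2
  have heval : ∀ x : ℝ, P.eval x = c0 + c1*x + c2*x^2 := by
    intro x
    rw [Polynomial.eval_eq_sum_range' (Nat.lt_succ_of_le hdeg)]
    simp [Finset.sum_range_succ]
    rfl
  have hfun : (fun x : ℝ => P.eval x) = fun x : ℝ => c0 + c1*x + c2*x^2 := funext heval
  set μ : ℝ := (a+b)/2 with hμ
  set h : ℝ := (b-a)/3 with hh
  have hhpos : 0 < h := by rw [hh]; linarith
  set α : ℝ := c0 + c1*μ + c2*μ^2 with hα
  set β : ℝ := c1 + 2*c2*μ with hβ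
  have hPid : ∀ x : ℝ, P.eval x = α + β*(x-μ) + c2*(x-μ)^2 := by
    intro x
    rw [heval x, hα, hβ]
    ring
  have hx1 : a ≤ a + h := by linarith
  have hx2 : a + h ≤ a + 2*h := by linarith
  have hx3 : a + 2*h ≤ b := by rw [hh]; linarith
  -- the three third-integrals
  have hV1 : ∫ x in a..(a+h), P.eval x = h * (α - β*h + c2*(13/12)*h^2) := by
    rw [hfun, integral_quadratic, hα, hβ, hμ, hh]; ring
  have hV2 : ∫ x in (a+h)..(a+2*h), P.eval x = h * (α + c2*h^2/12) := by
    rw [hfun, integral_quadratic, hα, hμ, hh]; ring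
  have hV3 : ∫ x in (a+2*h)..b, P.eval x = h * (α + β*h + c2*(13/12)*h^2) := by
    rw [hfun, integral_quadratic, hα, hβ, hμ, hh]; ring
  have hcont : Continuous fun x : ℝ => |P.eval x| := P.continuous.abs
  set J : ℝ := ∫ t' in a..b, |P.eval t'| with hJ
  have hJ0 : 0 ≤ J := by
    rw [hJ]; exact intervalIntegral.integral_nonneg hab.le (fun x _ => abs_nonneg _)
  have hJsplit : (∫ x in a..(a+h), |P.eval x|) + (∫ x in (a+h)..(a+2*h), |P.eval x|)
      + (∫ x in (a+2*h)..b, |P.eval x|) = J := by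
    rw [hJ]
    rw [intervalIntegral.integral_add_adjacent_intervals
      (hcont.intervalIntegrable _ _) (hcont.intervalIntegrable _ _)]
    exact intervalIntegral.integral_add_adjacent_intervals
      (hcont.intervalIntegrable _ _) (hcont.intervalIntegrable _ _)
  set U : ℝ := α - β*h + c2*(13/12)*h^2 with hU
  set V : ℝ := α + c2*h^2/12 with hV
  set W : ℝ := α + β*h + c2*(13/12)*h^2 with hW
  have k1 : h * |U| ≤ ∫ x in a..(a+h), |P.eval x| := by
    have := intervalIntegral.abs_integral_le_integral_abs (μ := volume)
      (f := fun x => P.eval x) hx1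
    rw [hV1, abs_mul, abs_of_pos hhpos] at this
    exact this
  have k2 : h * |V| ≤ ∫ x in (a+h)..(a+2*h), |P.eval x| := by
    have := intervalIntegral.abs_integral_le_integral_abs (μ := volume)
      (f := fun x => P.eval x) hx2
    rw [hV2, abs_mul, abs_of_pos hhpos] at this
    exact this
  have k3 : h * |W| ≤ ∫ x in (a+2*h)..b, |P.eval x| := by
    have := intervalIntegral.abs_integral_le_integral_abs (μ := volume)
      (f := fun x => P.eval x) hx3
    rw [hV3, abs_mul, abs_of_pos hhpos] at this
    exact this
  set S : ℝ := |U| + |V| + |W| with hS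
  have hS0 : 0 ≤ S := by positivity
  have hShJ : S * h ≤ J := by
    have e : S * h = h * |U| + h * |V| + h * |W| := by rw [hS]; ring
    rw [e]
    linarith [k1, k2, k3, hJsplit]
  -- coefficient bounds
  have hγS : |c2| * (h*h) ≤ S := by
    have e : (U + W) - 2*V = c2 * (2*(h*h)) := by rw [hU, hV, hW]; ring
    have h1 : |(U + W) - 2*V| ≤ |U| + |W| + 2*|V| := by
      calc |(U + W) - 2*V| ≤ |U + W| + |2*V| := abs_sub _ _
        _ ≤ |U| + |W| + 2*|V| := by
          have := abs_add_le U W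
          rw [abs_mul, abs_of_nonneg (by norm_num : (0:ℝ) ≤ 2)]
          linarith
    rw [e, abs_mul, abs_of_nonneg (by positivity : (0:ℝ) ≤ 2*(h*h))] at h1
    have e3 : |c2| * (2*(h*h)) = |c2| * (h*h) * 2 := by ring
    rw [e3] at h1
    rw [hS]
    linarith [abs_nonneg U, abs_nonneg W]
  have hβS : |β| * (2*h) ≤ S := by
    have e : W - U = β * (2*h) := by rw [hU, hW]; ring
    have h1 : |W - U| ≤ |W| + |U| := abs_sub _ _
    rw [e, abs_mul, abs_of_nonneg (by positivity : (0:ℝ) ≤ 2*h)] at h1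
    have : (0:ℝ) ≤ |V| := abs_nonneg _
    rw [hS]
    linarith
  have hαS : |α| ≤ (13/12) * S := by
    have e : α = V - c2*(h^2/12) := by rw [hV]; ring
    have h1 : |α| ≤ |V| + |c2| * (h^2/12) := by
      rw [e]
      refine (abs_sub _ _).trans ?_
      rw [abs_mul, abs_of_nonneg (by positivity : (0:ℝ) ≤ h^2/12)]
    have h2 : |c2| * h^2 ≤ S := by
      have e2 : h^2 = h*h := sq h
      rw [e2]; exact hγS
    have e4 : |c2| * (h^2/12) = (|c2| * h^2)/12 := by ring
    rw [e4] at h1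
    have hV' : |V| ≤ S := by rw [hS]; linarith [abs_nonneg U, abs_nonneg W]
    linarith
  -- distance bound
  have hτ : |t - μ| ≤ M + (3/2)*h := by
    have := abs_sub_mid_le (t := t) hab.le
    rw [← hμ] at this
    have e : (b-a)/2 = (3/2)*h := by rw [hh]; ring
    rw [e] at this
    linarith
  have hτ0 : (0:ℝ) ≤ |t - μ| := abs_nonneg _
  have hK0 : (0:ℝ) ≤ M + (3/2)*h := by positivity
  have hPt : |P.eval t| ≤ |α| + |β| * |t - μ| + |c2| * |t - μ|^2 := by
    rw [hPid t]
    calc |α + β*(t-μ) + c2*(t-μ)^2| ≤ |α + β*(t-μ)| + |c2*(t-μ)^2| := abs_add_le _ _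
      _ ≤ |α| + |β*(t-μ)| + |c2*(t-μ)^2| := by linarith [abs_add_le α (β*(t-μ))]
      _ = |α| + |β| * |t - μ| + |c2| * |t - μ|^2 := by
          rw [abs_mul, abs_mul, ← abs_pow]
  have hb3h : b - a = 3*h := by rw [hh]; ring
  have h3hM : 3*h ≤ M := by rw [← hb3h]; exact hbaM
  -- assemble
  have hβ' : |β| * |t - μ| ≤ (S/(2*h)) * ((3/2)*M) := by
    refine mul_le_mul ?_ ?_ hτ0 (by positivity)
    · rw [le_div_iff₀ (by positivity)]; exact hβS
    · refine hτ.trans ?_; linarith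
  have hγ' : |c2| * |t - μ|^2 ≤ (S/(h*h)) * (((3/2)*M)^2) := by
    refine mul_le_mul ?_ ?_ (by positivity) (by positivity)
    · rw [le_div_iff₀ (by positivity)]; exact hγS
    · refine pow_le_pow_left₀ hτ0 (hτ.trans (by linarith)) 2
  have target_eq : (8 * 2 * M / (b-a)) ^ 2 * ((1/(b-a)) * J) = 256*(M^2)*J/(27*(h*h*h)) := by
    rw [hb3h]
    field_simp
    ring
  have hC : (117/4)*h^2 + (81/4)*M*h + (243/4)*M^2 ≤ 256*M^2 := by
    have q1 : (3*h)*(3*h) ≤ M*M := mul_le_mul h3hM h3hM (by positivity) hM.le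
    have q2 : M*(3*h) ≤ M*M := mul_le_mul_of_nonneg_left h3hM hM.le
    linarith [q1, q2, mul_self_nonneg M]
  have hprod : S*h*((117/4)*h^2 + (81/4)*M*h + (243/4)*M^2) ≤ J*(256*M^2) :=
    mul_le_mul hShJ hC (by positivity) hJ0
  have hfin : |α| + (S/(2*h)) * ((3/2)*M) + (S/(h*h)) * (((3/2)*M)^2)
      ≤ 256*(M^2)*J/(27*(h*h*h)) := by
    rw [le_div_iff₀ (by positivity : (0:ℝ) < 27*(h*h*h))]
    have expand : ((13/12)*S + (S/(2*h)) * ((3/2)*M) + (S/(h*h)) * (((3/2)*M)^2))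
        * (27*(h*h*h))
        = S*h*((117/4)*h^2 + (81/4)*M*h + (243/4)*M^2) := by
      field_simp
      ring
    have step : (|α| + (S/(2*h)) * ((3/2)*M) + (S/(h*h)) * (((3/2)*M)^2)) * (27*(h*h*h))
        ≤ ((13/12)*S + (S/(2*h)) * ((3/2)*M) + (S/(h*h)) * (((3/2)*M)^2)) * (27*(h*h*h)) := by
      refine mul_le_mul_of_nonneg_right ?_ (by positivity)
      linarith
    calc (|α| + (S/(2*h)) * ((3/2)*M) + (S/(h*h)) * (((3/2)*M)^2)) * (27*(h*h*h))
        ≤ ((13/12)*S + (S/(2*h)) * ((3/2)*M) + (S/(h*h)) * (((3/2)*M)^2)) * (27*(h*h*h)) := step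
      _ = S*h*((117/4)*h^2 + (81/4)*M*h + (243/4)*M^2) := expand
      _ ≤ J*(256*M^2) := hprod
      _ = 256*(M^2)*J := by ring
  rw [target_eq]
  calc |P.eval t| ≤ |α| + |β| * |t - μ| + |c2| * |t - μ|^2 := hPt
    _ ≤ |α| + (S/(2*h)) * ((3/2)*M) + (S/(h*h)) * (((3/2)*M)^2) := by linarith
    _ ≤ 256*(M^2)*J/(27*(h*h*h)) := hfin

set_option maxHeartbeats 2000000 in
lemma main_ge3 (m : ℕ) (hm : 3 ≤ m) (P : Polynomial ℝ) (hdeg : P.natDegree ≤ m)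
    (a b : ℝ) (hab : a < b) (t : ℝ) :
    |P.eval t| ≤
      (8 * m * max (b - a) (Metric.infDist t (Set.Icc a b)) / (b - a)) ^ m *
        ((1 / (b - a)) * ∫ t' in a..b, |P.eval t'|) := by
  have hba : (0:ℝ) < b - a := by linarith
  set M : ℝ := max (b - a) (Metric.infDist t (Set.Icc a b)) with hM_def
  have hbaM : b - a ≤ M := le_max_left _ _
  have hdM : Metric.infDist t (Set.Icc a b) ≤ M := le_max_right _ _
  have hM : 0 < M := lt_of_lt_of_le hba hbaM
  have hmR : (3:ℝ) ≤ (m:ℝ) := by exact_mod_cast hm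
  have hD : (0:ℝ) < 10*m+3 := by linarith
  set s : ℝ := (b - a) / (10*m+3) with hs_def
  have hs : 0 < s := div_pos hba hD
  have hDs : (10*(m:ℝ)+3) * s = b - a := by
    rw [hs_def]; field_simp
  have hcont : Continuous fun x : ℝ => |P.eval x| := P.continuous.abs
  -- minimum points in windows
  have hminex : ∀ j : ℕ, ∃ x ∈ Set.Icc (a + 10*(j:ℝ)*s) (a + (10*(j:ℝ)+3)*s),
      ∀ y ∈ Set.Icc (a + 10*(j:ℝ)*s) (a + (10*(j:ℝ)+3)*s), |P.eval x| ≤ |P.eval y| := by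
    intro j
    have hne : (Set.Icc (a + 10*(j:ℝ)*s) (a + (10*(j:ℝ)+3)*s)).Nonempty :=
      Set.nonempty_Icc.mpr (by nlinarith [Nat.cast_nonneg (α := ℝ) j])
    obtain ⟨x, hx, hx2⟩ := isCompact_Icc.exists_isMinOn hne hcont.continuousOn
    exact ⟨x, hx, fun y hy => hx2 hy⟩
  choose ts hts1 hts2 using hminex
  have htsl : ∀ j : ℕ, a + 10*(j:ℝ)*s ≤ ts j := fun j => (hts1 j).1
  have htsr : ∀ j : ℕ, ts j ≤ a + (10*(j:ℝ)+3)*s := fun j => (hts1 j).2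
  -- membership in [a,b]
  have htsIcc : ∀ j : ℕ, j ≤ m → ts j ∈ Set.Icc a b := by
    intro j hj
    have hjR : (j:ℝ) ≤ m := by exact_mod_cast hj
    constructor
    · have := htsl j; nlinarith [Nat.cast_nonneg (α := ℝ) j]
    · have := htsr j; nlinarith
  -- separation
  have hsep : ∀ j k : ℕ, k < j → 7*s*((j:ℝ)-(k:ℝ)) ≤ ts j - ts k := by
    intro j k hkj
    have h1 := htsl j
    have h2 := htsr k
    have hk1 : (k:ℝ) + 1 ≤ j := by exact_mod_cast hkj
    nlinarith
  have hsep' : ∀ j k : ℕ, j ≠ k → 7*s*|(j:ℝ)-(k:ℝ)| ≤ |ts j - ts k| := by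
    intro j k hjk
    rcases Nat.lt_or_ge k j with h | h
    · have := hsep j k h
      have hjkR : (0:ℝ) ≤ (j:ℝ) - k := by
        have : (k:ℝ) ≤ j := by exact_mod_cast h.le
        linarith
      rw [abs_of_nonneg hjkR, abs_of_nonneg (by nlinarith : (0:ℝ) ≤ ts j - ts k)]
      exact this
    · have hkj : j < k := lt_of_le_of_ne h hjk
      have := hsep k j hkj
      have hjkR : (j:ℝ) - k ≤ 0 := by
        have : (j:ℝ) ≤ k := by exact_mod_cast hkj.le
        linarith
      rw [abs_of_nonpos hjkR, abs_of_nonpos (by nlinarith : ts j - ts k ≤ 0)]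
      linarith
  have hinj : Set.InjOn ts (Finset.range (m+1) : Finset ℕ) := by
    intro j hj k hk hjk
    by_contra hne
    have h1 := hsep' j k hne
    rw [hjk, sub_self, abs_zero] at h1
    have : (j:ℝ) ≠ k := by exact_mod_cast hne
    have h2 : 0 < |(j:ℝ)-(k:ℝ)| := abs_pos.mpr (sub_ne_zero.mpr this)
    nlinarith
  -- distance from t to nodes
  have ht2M : ∀ k : ℕ, k ≤ m → |t - ts k| ≤ 2*M := by
    intro k hk
    have := abs_sub_le_infDist_add a b t (ts k) hab.le (htsIcc k hk)
    linarith
  -- Lagrange bound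
  have hdegP : P.degree < (Finset.range (m+1)).card := by
    rw [Finset.card_range]
    calc P.degree ≤ (P.natDegree : WithBot ℕ) := Polynomial.degree_le_natDegree
      _ < ((m+1 : ℕ) : WithBot ℕ) := by
          exact_mod_cast Nat.lt_succ_of_le hdeg
  have hL := lagrange_abs_bound hinj P hdegP t
  -- bound on each product
  set B : ℝ := (4*M/(7*s))^m / (Nat.factorial m) with hB_def
  have hprodle : ∀ j ∈ Finset.range (m+1),
      ∏ k ∈ (Finset.range (m+1)).erase j, (|t - ts k| / |ts j - ts k|) ≤ B := by
    intro j hj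
    have hjm : j ≤ m := Nat.lt_succ_iff.mp (Finset.mem_range.mp hj)
    have step1 : ∏ k ∈ (Finset.range (m+1)).erase j, (|t - ts k| / |ts j - ts k|)
        ≤ ∏ k ∈ (Finset.range (m+1)).erase j, ((2*M/(7*s)) / |(j:ℝ)-(k:ℝ)|) := by
      refine Finset.prod_le_prod (fun k _ => div_nonneg (abs_nonneg _) (abs_nonneg _)) ?_
      intro k hk
      obtain ⟨hkj, hkr⟩ := Finset.mem_erase.mp hk
      have hkm : k ≤ m := Nat.lt_succ_iff.mp (Finset.mem_range.mp hkr)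
      have habs : (0:ℝ) < |(j:ℝ)-(k:ℝ)| := by
        refine abs_pos.mpr (sub_ne_zero.mpr ?_)
        exact_mod_cast (Ne.symm hkj)
      have h1 : |t - ts k| ≤ 2*M := ht2M k hkm
      have h2 : 7*s*|(j:ℝ)-(k:ℝ)| ≤ |ts j - ts k| := hsep' j k (Ne.symm hkj)
      rw [div_div]
      exact div_le_div₀ (by positivity) h1 (by positivity) h2
    have step2 : ∏ k ∈ (Finset.range (m+1)).erase j, ((2*M/(7*s)) / |(j:ℝ)-(k:ℝ)|)
        = (2*M/(7*s))^m / ((Nat.factorial j) * (Nat.factorial (m-j))) := by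
      rw [Finset.prod_div_distrib, Finset.prod_const, prod_abs_sub_nodes m j hjm,
        Finset.card_erase_of_mem hj, Finset.card_range]
      norm_num
    have hfacNat : Nat.factorial m ≤ 2^m * (Nat.factorial j * Nat.factorial (m-j)) := by
      have h1 : m.choose j * (Nat.factorial j * Nat.factorial (m-j)) = Nat.factorial m := by
        rw [← Nat.choose_mul_factorial_mul_factorial hjm]; ring
      have h2 : m.choose j ≤ 2^m := by
        calc m.choose j ≤ ∑ i ∈ Finset.range (m+1), m.choose i :=
              Finset.single_le_sum (fun i _ => Nat.zero_le _) hj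
          _ = 2^m := Nat.sum_range_choose m
      calc Nat.factorial m = m.choose j * (Nat.factorial j * Nat.factorial (m-j)) := h1.symm
        _ ≤ 2^m * (Nat.factorial j * Nat.factorial (m-j)) :=
            Nat.mul_le_mul_right _ h2
    have hfacR : (Nat.factorial m : ℝ) ≤ 2^m * ((Nat.factorial j : ℝ) * (Nat.factorial (m-j))) := by
      exact_mod_cast hfacNat
    have step3 : (2*M/(7*s))^m / ((Nat.factorial j : ℝ) * (Nat.factorial (m-j))) ≤ B := by
      rw [hB_def]
      have h4 : (4*M/(7*s))^m = (2*M/(7*s))^m * 2^m := by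
        rw [← mul_pow]
        congr 1
        field_simp
        ring
      rw [h4, div_le_div_iff₀ (by positivity) (by positivity)]
      have h0 : (0:ℝ) ≤ (2*M/(7*s))^m := by positivity
      nlinarith [mul_le_mul_of_nonneg_left hfacR h0]
    calc ∏ k ∈ (Finset.range (m+1)).erase j, (|t - ts k| / |ts j - ts k|)
        ≤ ∏ k ∈ (Finset.range (m+1)).erase j, ((2*M/(7*s)) / |(j:ℝ)-(k:ℝ)|) := step1
      _ = (2*M/(7*s))^m / ((Nat.factorial j) * (Nat.factorial (m-j))) := step2
      _ ≤ B := step3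
  have hB0 : 0 ≤ B := by rw [hB_def]; positivity
  -- integral bounds
  have hintW : ∀ j : ℕ, j ≤ m → |P.eval (ts j)| * (3*s)
      ≤ ∫ x in (a + 10*(j:ℝ)*s)..(a + (10*(j:ℝ)+3)*s), |P.eval x| := by
    intro j hj
    have hle : a + 10*(j:ℝ)*s ≤ a + (10*(j:ℝ)+3)*s := by nlinarith
    have := intervalIntegral.integral_mono_on (μ := volume)
      (f := fun _ : ℝ => |P.eval (ts j)|) (g := fun x => |P.eval x|) hle
      (intervalIntegrable_const) (hcont.intervalIntegrable _ _) (fun x hx => hts2 j x hx)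
    rw [intervalIntegral.integral_const] at this
    calc |P.eval (ts j)| * (3*s) = (a + (10*(j:ℝ)+3)*s - (a + 10*(j:ℝ)*s)) • |P.eval (ts j)| := by
          rw [smul_eq_mul]; ring
      _ ≤ _ := this
  have hintb : ∫ t' in a..b, |P.eval t'| = ∫ x in a..b, |P.eval x| := rfl
  set J : ℝ := ∫ x in a..b, |P.eval x| with hJ_def
  have hJ0 : 0 ≤ J := by
    rw [hJ_def]
    apply intervalIntegral.integral_nonneg hab.le
    intro x _; exact abs_nonneg _
  -- blocks
  have hblocks : ∑ j ∈ Finset.range (m+1),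
      (∫ x in (a + 10*(j:ℝ)*s)..(a + (10*(j:ℝ)+3)*s), |P.eval x|) ≤ J := by
    obtain ⟨u, hu_def⟩ : ∃ u : ℕ → ℝ, ∀ k : ℕ, u k = a + (min (10*(k:ℝ)) (10*(m:ℝ)+3)) * s :=
      ⟨_, fun k => rfl⟩
    have hu0 : u 0 = a := by
      rw [hu_def 0]
      push_cast
      rw [min_eq_left (by linarith : 10*(0:ℝ) ≤ 10*(m:ℝ)+3)]
      ring
    have hum : u (m+1) = b := by
      rw [hu_def (m+1)]
      push_cast
      rw [min_eq_right (by linarith : 10*(m:ℝ)+3 ≤ 10*((m:ℝ)+1))]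
      linarith [hDs]
    have hsum : ∑ j ∈ Finset.range (m+1), (∫ x in (u j)..(u (j+1)), |P.eval x|) = J := by
      rw [intervalIntegral.sum_integral_adjacent_intervals
        (fun k _ => hcont.intervalIntegrable _ _), hu0, hum]
    rw [← hsum]
    refine Finset.sum_le_sum fun j hj => ?_
    have hjm : j ≤ m := Nat.lt_succ_iff.mp (Finset.mem_range.mp hj)
    have hjR : (j:ℝ) ≤ m := by exact_mod_cast hjm
    have huj : u j = a + 10*(j:ℝ)*s := by
      rw [hu_def j, min_eq_left (by linarith)]
    have huj1 : a + (10*(j:ℝ)+3)*s ≤ u (j+1) := by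
      rw [hu_def (j+1)]
      push_cast
      have h1 : 10*(j:ℝ)+3 ≤ min (10*((j:ℝ)+1)) (10*(m:ℝ)+3) := by
        apply le_min <;> nlinarith
      nlinarith
    refine intervalIntegral.integral_mono_interval huj.le (by nlinarith) huj1
      (ae_of_all _ fun x => abs_nonneg _) (hcont.intervalIntegrable _ _)
  -- sum of values bound
  have hsumvals : (∑ j ∈ Finset.range (m+1), |P.eval (ts j)|) * (3*s) ≤ J := by
    rw [Finset.sum_mul]
    calc ∑ j ∈ Finset.range (m+1), |P.eval (ts j)| * (3*s)
        ≤ ∑ j ∈ Finset.range (m+1),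
            (∫ x in (a + 10*(j:ℝ)*s)..(a + (10*(j:ℝ)+3)*s), |P.eval x|) :=
          Finset.sum_le_sum fun j hj =>
            hintW j (Nat.lt_succ_iff.mp (Finset.mem_range.mp hj))
      _ ≤ J := hblocks
  -- assemble
  have hmain : |P.eval t| ≤ B * (∑ j ∈ Finset.range (m+1), |P.eval (ts j)|) := by
    refine hL.trans ?_
    rw [Finset.mul_sum]
    refine Finset.sum_le_sum fun j hj => ?_
    rw [mul_comm B _]
    exact mul_le_mul_of_nonneg_left (hprodle j hj) (abs_nonneg _)
  have hsum2 : ∑ j ∈ Finset.range (m+1), |P.eval (ts j)| ≤ J / (3*s) := by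
    rw [le_div_iff₀ (by positivity)]
    exact hsumvals
  have hfinal : |P.eval t| ≤ B * (J / (3*s)) :=
    hmain.trans (mul_le_mul_of_nonneg_left hsum2 hB0)
  refine hfinal.trans ?_
  -- final numeric comparison
  have hfacpos : (0:ℝ) < Nat.factorial m := by exact_mod_cast Nat.factorial_pos m
  have e1 : 4*M/(7*s) = (8*m*M/(b-a)) * ((10*m+3)/(14*m)) := by
    rw [hs_def]
    field_simp
    ring
  have hkey := key_numeric m hm
  have hcoef : B / (3*s) ≤ (8*m*M/(b-a))^m * (1/(b-a)) := by
    rw [hB_def, e1, mul_pow]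
    have e2 : ((8*(m:ℝ)*M/(b-a))^m * ((10*m+3)/(14*m))^m) / (Nat.factorial m) / (3*s)
        = (8*(m:ℝ)*M/(b-a))^m * ((((10*m+3)/(14*m))^m * ((10*m+3)/3)) / (Nat.factorial m))
          * (1/(b-a)) := by
      rw [hs_def]
      field_simp
    rw [e2]
    have h3 : (((10*(m:ℝ)+3)/(14*m))^m * ((10*m+3)/3)) / (Nat.factorial m) ≤ 1 :=
      (div_le_one hfacpos).mpr hkey
    have h4 : (0:ℝ) ≤ (8*(m:ℝ)*M/(b-a))^m := by positivity
    calc (8*(m:ℝ)*M/(b-a))^m * ((((10*m+3)/(14*m))^m * ((10*m+3)/3)) / (Nat.factorial m))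
          * (1/(b-a))
        ≤ (8*(m:ℝ)*M/(b-a))^m * 1 * (1/(b-a)) := by
          apply mul_le_mul_of_nonneg_right _ (by positivity)
          exact mul_le_mul_of_nonneg_left h3 h4
      _ = (8*(m:ℝ)*M/(b-a))^m * (1/(b-a)) := by ring
  calc B * (J / (3*s)) = (B / (3*s)) * J := by ring
    _ ≤ ((8*m*M/(b-a))^m * (1/(b-a))) * J :=
        mul_le_mul_of_nonneg_right hcoef hJ0
    _ = (8*m*M/(b-a))^m * ((1/(b-a)) * J) := by ring


/-- Averaged polynomial bound: a polynomial of degree `m` at a point `t` is controlled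
by its average absolute value over an interval `I = [a,b]`, up to the factor
`(8 m · max{|I|, dist(t,I)} / |I|)^m`. -/
theorem averaged_polynomial_bound (m : ℕ) (P : Polynomial ℝ) (hdeg : P.natDegree = m)
    (a b : ℝ) (hab : a < b) (t : ℝ) :
    |P.eval t| ≤
      (8 * m * max (b - a) (Metric.infDist t (Set.Icc a b)) / (b - a)) ^ m *
        ((1 / (b - a)) * ∫ t' in a..b, |P.eval t'|) := by
  rcases Nat.lt_or_ge m 3 with hm | hm
  · interval_cases m
    · rw [pow_zero, one_mul]
      exact main_eq0 P hdeg a b hab t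
    · have := main_eq1 P hdeg.le a b hab t
      push_cast
      convert this using 3
    · have := main_eq2 P hdeg.le a b hab t
      push_cast
      convert this using 3
  · exact main_ge3 m hm P hdeg.le a b hab t
end

section
/- Let z₁, …, z_m ∈ ℂ and t ∈ ℝ. Then |(t - z₁)⋯(t - z_m)| ≤ (8 m · max{|t-1|, 2})^m · ∫_{-1}^{1} |(t' - z₁)⋯(t' - z_m)| dt'. -/
open MeasureTheory

/-- Normalized averaged polynomial bound over `[-1,1]`: for complex roots `z₁,…,z_m` and `t ∈ ℝ`,
`|∏ (t - zⱼ)| ≤ (8 m · max{|t-1|, 2})^m · ∫_{-1}^1 |∏ (t' - zⱼ)| dt'`. -/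
theorem averaged_monic_bound (m : ℕ) (z : Fin m → ℂ) (t : ℝ) :
    ‖∏ j, ((t : ℂ) - z j)‖ ≤
      (8 * m * max |t - 1| 2) ^ m * ∫ t' in (-1 : ℝ)..1, ‖∏ j, ((t' : ℂ) - z j)‖ := by
  rcases Nat.eq_zero_or_pos m with hm | hm
  · subst hm
    simp
  set M := max |t - 1| 2 with hM
  have hM2 : (2:ℝ) ≤ M := le_max_right _ _
  have hm1 : (1:ℝ) ≤ (m:ℝ) := by exact_mod_cast hm
  set C : ℝ := 8 * m * M with hC
  have hC1 : (1:ℝ) ≤ C := by nlinarith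
  set δ : ℝ := 1 / (2 * m) with hδ
  have hδpos : 0 < δ := by positivity
  set f : ℝ → ℝ := fun t' => ‖∏ j, ((t' : ℂ) - z j)‖ with hf
  have hfc : Continuous f := by
    apply Continuous.comp continuous_norm
    exact continuous_finset_prod _ fun j _ => by continuity
  have hf0 : ∀ x, 0 ≤ f x := fun x => norm_nonneg _
  set S : Set ℝ := Set.Icc (-1) 1 \ ⋃ j, Metric.ball ((z j).re) δ with hS
  have hSmeas : MeasurableSet S :=
    measurableSet_Icc.diff (MeasurableSet.iUnion fun j => Metric.isOpen_ball.measurableSet)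
  -- pointwise bound on S
  have key : ∀ t' ∈ S, ‖∏ j, ((t : ℂ) - z j)‖ ≤ C ^ m * f t' := by
    intro t' ht'
    obtain ⟨ht'I, ht'B⟩ := ht'
    simp only [Set.mem_iUnion, Metric.mem_ball, not_exists, Real.dist_eq, not_lt] at ht'B
    have hfac : ∀ j, ‖(t : ℂ) - z j‖ ≤ C * ‖(t' : ℂ) - z j‖ := by
      intro j
      have h1 : δ ≤ |t' - (z j).re| := ht'B j
      have h2 : |t' - (z j).re| ≤ ‖(t' : ℂ) - z j‖ := by
        have := Complex.abs_re_le_norm ((t' : ℂ) - z j)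
        simpa using this
      have hδle : δ ≤ ‖(t' : ℂ) - z j‖ := h1.trans h2
      have htt' : |t - t'| ≤ 2 * M := by
        have h3 : |t - 1| ≤ M := le_max_left _ _
        have h4 : |1 - t'| ≤ 2 := by
          rw [abs_le]; constructor
          · linarith [ht'I.2]
          · linarith [ht'I.1]
        calc |t - t'| ≤ |t - 1| + |1 - t'| := abs_sub_le t 1 t'
          _ ≤ M + 2 := add_le_add h3 h4
          _ ≤ 2 * M := by linarith
      have htri : ‖(t : ℂ) - z j‖ ≤ |t - t'| + ‖(t' : ℂ) - z j‖ := by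
        calc ‖(t : ℂ) - z j‖
            ≤ ‖(t:ℂ) - (t':ℂ)‖ + ‖(t':ℂ) - z j‖ :=
              norm_sub_le_norm_sub_add_norm_sub (t:ℂ) (t':ℂ) (z j)
          _ = |t - t'| + ‖(t':ℂ) - z j‖ := by
              congr 1
              rw [← Complex.ofReal_sub, Complex.norm_real, Real.norm_eq_abs]
      have h5 : |t - t'| ≤ (4 * m * M) * ‖(t':ℂ) - z j‖ := by
        have heq : (4 * m * M) * δ = 2 * M := by
          rw [hδ]; field_simp; ring
        have := mul_le_mul_of_nonneg_left hδle (by positivity : (0:ℝ) ≤ 4*m*M)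
        linarith
      have habs := norm_nonneg ((t':ℂ) - z j)
      have hCle : (4 * m * M + 1 : ℝ) ≤ C := by nlinarith
      nlinarith
    calc ‖∏ j, ((t : ℂ) - z j)‖ = ∏ j, ‖(t:ℂ) - z j‖ :=
          norm_prod _ _
      _ ≤ ∏ j, (C * ‖(t':ℂ) - z j‖) :=
          Finset.prod_le_prod (fun j _ => norm_nonneg _) (fun j _ => hfac j)
      _ = C ^ m * f t' := by
          rw [Finset.prod_mul_distrib, Finset.prod_const, Finset.card_univ, Fintype.card_fin, hf]
          simp [map_prod]
  -- measure of S
  have hμS : 1 ≤ (volume S).toReal := by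
    have hU : volume (⋃ j, Metric.ball ((z j).re) δ) ≤ 1 := by
      calc volume (⋃ j, Metric.ball ((z j).re) δ)
          ≤ ∑ j : Fin m, volume (Metric.ball ((z j).re) δ) := measure_iUnion_fintype_le _ _
        _ = ∑ j : Fin m, ENNReal.ofReal (2 * δ) := by
            simp [Real.volume_ball]
        _ = 1 := by
            have hm0 : (m:ℝ) ≠ 0 := by positivity
            have hmd : (m:ℝ) * (2 * δ) = 1 := by rw [hδ]; field_simp
            rw [Finset.sum_const, Finset.card_univ, Fintype.card_fin, nsmul_eq_mul,
              show ((m:ENNReal)) = ENNReal.ofReal (m:ℝ) from (ENNReal.ofReal_natCast m).symm,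
              ← ENNReal.ofReal_mul (by positivity : (0:ℝ) ≤ (m:ℝ)), hmd, ENNReal.ofReal_one]
    have hdiff : volume (Set.Icc (-1:ℝ) 1) - volume (⋃ j, Metric.ball ((z j).re) δ) ≤ volume S :=
      le_measure_diff
    have hIcc : volume (Set.Icc (-1:ℝ) 1) = ENNReal.ofReal 2 := by
      rw [Real.volume_Icc]; norm_num
    have h1le : (1 : ENNReal) ≤ volume S := by
      refine le_trans ?_ hdiff
      rw [hIcc]
      have : (ENNReal.ofReal 2) - 1 = 1 := by
        rw [show (2:ℝ) = 1 + 1 by norm_num, ENNReal.ofReal_add (by norm_num) (by norm_num)]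
        simp
      rw [← this]
      exact tsub_le_tsub_left hU _
    have hfin : volume S ≠ ⊤ := by
      have : volume S ≤ volume (Set.Icc (-1:ℝ) 1) := measure_mono Set.diff_subset
      rw [hIcc] at this
      exact ne_top_of_le_ne_top (by simp) this
    have := ENNReal.toReal_mono hfin h1le
    simpa using this
  -- integral bounds
  set c : ℝ := ‖∏ j, ((t : ℂ) - z j)‖ / C ^ m with hc
  have hCpow : (0:ℝ) < C ^ m := by positivity
  have hc0 : 0 ≤ c := by
    rw [hc]; positivity
  have hkey' : ∀ t' ∈ S, c ≤ f t' := by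
    intro t' ht'
    rw [hc, div_le_iff₀ hCpow]
    calc ‖∏ j, ((t : ℂ) - z j)‖ ≤ C ^ m * f t' := key t' ht'
      _ = f t' * C ^ m := mul_comm _ _
  have hintIcc : IntegrableOn f (Set.Icc (-1:ℝ) 1) := hfc.integrableOn_Icc
  have hintS : IntegrableOn f S := hintIcc.mono_set Set.diff_subset
  have h6 : c * (volume S).toReal ≤ ∫ x in S, f x := by
    have h := setIntegral_ge_of_const_le hSmeas
      (by
        have : volume S ≤ volume (Set.Icc (-1:ℝ) 1) := measure_mono Set.diff_subset
        exact ne_top_of_le_ne_top (by simp [Real.volume_Icc]) this)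
      hkey' hintS
    rw [smul_eq_mul, mul_comm] at h
    exact h
  have h7 : (∫ x in S, f x) ≤ ∫ x in Set.Icc (-1:ℝ) 1, f x :=
    setIntegral_mono_set hintIcc
      (Filter.Eventually.of_forall hf0)
      (HasSubset.Subset.eventuallyLE Set.diff_subset)
  have h8 : (∫ t' in (-1:ℝ)..1, f t') = ∫ x in Set.Icc (-1:ℝ) 1, f x := by
    rw [intervalIntegral.integral_of_le (by norm_num : (-1:ℝ) ≤ 1),
      ← integral_Icc_eq_integral_Ioc]
  have h9 : c ≤ ∫ t' in (-1:ℝ)..1, f t' := by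
    rw [h8]
    calc c = c * 1 := (mul_one c).symm
      _ ≤ c * (volume S).toReal := by
          exact mul_le_mul_of_nonneg_left hμS hc0
      _ ≤ ∫ x in S, f x := h6
      _ ≤ _ := h7
  have : ‖∏ j, ((t : ℂ) - z j)‖ = C ^ m * c := by
    rw [hc, mul_div_cancel₀ _ (ne_of_gt hCpow)]
  rw [this]
  exact mul_le_mul_of_nonneg_left h9 (le_of_lt hCpow)
end

section
/- Let z₁, …, z_k ∈ ℂ with |z_j| ≥ 2 for all j, and let z_{k+1}, …, z_m ∈ ℂ with |z_j| < 2 for all j. Then ∫_{-1}^{1} |(t' - z₁)⋯(t' - z_m)| dt' ≥ (1/2)^k · |z₁|⋯|z_k| · (1/(2(m-k)))^{m-k}. -/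
set_option maxHeartbeats 1000000


open MeasureTheory

/-- Lower bound for the average of a monic polynomial over `[-1,1]` in terms of the
product of the moduli of its 'large' roots. The roots `z j` with `j < k` have modulus `≥ 2`
and those with `k ≤ j` have modulus `< 2`. When `k = m` the last factor is `x^0 = 1`. -/
theorem averaged_monic_lower_bound (m k : ℕ) (hkm : k ≤ m) (z : Fin m → ℂ)
    (hlarge : ∀ j : Fin m, (j : ℕ) < k → 2 ≤ ‖z j‖)
    (hsmall : ∀ j : Fin m, k ≤ (j : ℕ) → ‖z j‖ < 2) :
    (1 / 2) ^ k * (∏ j ∈ Finset.univ.filter (fun j : Fin m => (j : ℕ) < k), ‖z j‖) *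
        (1 / (2 * (m - k : ℝ))) ^ (m - k) ≤
      ∫ t' in (-1 : ℝ)..1, ‖∏ j, ((t' : ℂ) - z j)‖ := by
  classical
  set L : Finset (Fin m) := Finset.univ.filter (fun j : Fin m => (j : ℕ) < k) with hLdef
  set T : Finset (Fin m) := Finset.univ.filter (fun j : Fin m => ¬ (j : ℕ) < k) with hTdef
  set s : ℕ := m - k with hs
  set ε : ℝ := 1 / (2 * (s : ℝ)) with hε
  have hε0 : 0 ≤ ε := by positivity
  -- cardinalities
  have hcardL : L.card = k := by
    rw [← Finset.card_range k]
    apply Finset.card_bij (fun (j : Fin m) _ => (j : ℕ))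
    · intro a ha; simp only [hLdef, Finset.mem_filter] at ha
      simpa using ha.2
    · intro a _ b _ h; exact Fin.val_injective h
    · intro b hb
      simp only [Finset.mem_range] at hb
      exact ⟨⟨b, lt_of_lt_of_le hb hkm⟩, by simp [hLdef, hb], rfl⟩
  have hcardT : T.card = s := by
    have h := Finset.card_filter_add_card_filter_not (s := (Finset.univ : Finset (Fin m)))
      (p := fun j : Fin m => (j : ℕ) < k)
    rw [Finset.card_univ, Fintype.card_fin, ← hLdef, ← hTdef] at h
    omega
  set P : ℝ := ∏ j ∈ L, ‖z j‖ with hP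
  have hP0 : 0 ≤ P := Finset.prod_nonneg fun j _ => (norm_nonneg _)
  set c : ℝ := (1 / 2) ^ k * P * ε ^ s with hc
  set f : ℝ → ℝ := fun t => ‖∏ j, ((t : ℂ) - z j)‖ with hf
  have hfc : Continuous f := by
    apply continuous_norm.comp
    exact continuous_finset_prod _ fun j _ => by continuity
  have hfnn : ∀ t, 0 ≤ f t := fun t => norm_nonneg _
  -- the good set
  set A : Set ℝ := Set.Ioc (-1 : ℝ) 1 \ ⋃ j ∈ T, Metric.closedBall ((z j).re) ε with hA
  have hAmeas : MeasurableSet A :=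
    measurableSet_Ioc.diff (Finset.measurableSet_biUnion _ fun j _ => measurableSet_closedBall)
  have hAsub : A ⊆ Set.Ioc (-1 : ℝ) 1 := Set.diff_subset
  have hAfin : volume A ≠ ⊤ := by
    refine ne_top_of_le_ne_top ?_ (measure_mono hAsub)
    simp [Real.volume_Ioc]
  -- measure lower bound
  have hs2ε : (s : ℝ) * (2 * ε) ≤ 1 := by
    rcases Nat.eq_zero_or_pos s with h | h
    · simp [h]
    · have hspos : (0 : ℝ) < s := by exact_mod_cast h
      have heq : (s : ℝ) * (2 * (1 / (2 * (s : ℝ)))) = 1 := by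
        field_simp
      rw [hε]; linarith
  have hμA : (1 : ℝ) ≤ (volume A).toReal := by
    have hU : volume (⋃ j ∈ T, Metric.closedBall ((z j).re) ε) ≤ ENNReal.ofReal 1 := by
      refine (measure_biUnion_finset_le _ _).trans ?_
      have : ∀ j ∈ T, volume (Metric.closedBall ((z j).re) ε) = ENNReal.ofReal (2 * ε) := by
        intro j _; rw [Real.volume_closedBall]
      rw [Finset.sum_congr rfl this, Finset.sum_const, hcardT, nsmul_eq_mul,
        ← ENNReal.ofReal_natCast, ← ENNReal.ofReal_mul (by positivity)]
      exact ENNReal.ofReal_le_ofReal hs2ε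
    have hdiff : ENNReal.ofReal 1 ≤ volume A := by
      have h1 : volume (Set.Ioc (-1 : ℝ) 1) - volume (⋃ j ∈ T, Metric.closedBall ((z j).re) ε)
          ≤ volume A := le_measure_diff
      have h2 : ENNReal.ofReal 2 - ENNReal.ofReal 1 ≤ volume A := by
        refine le_trans (tsub_le_tsub ?_ hU) h1
        rw [Real.volume_Ioc]; norm_num
      rwa [← ENNReal.ofReal_sub _ (by norm_num), show (2 : ℝ) - 1 = 1 by norm_num] at h2
    rwa [← ENNReal.ofReal_le_iff_le_toReal hAfin]
  -- pointwise bound on A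
  have hpt : ∀ t ∈ A, c ≤ f t := by
    intro t ht
    obtain ⟨htI, htU⟩ := ht
    have ht1 : |t| ≤ 1 := abs_le.mpr ⟨le_of_lt htI.1, htI.2⟩
    have hbig : (1 / 2) ^ k * P ≤ ∏ j ∈ L, ‖(t : ℂ) - z j‖ := by
      have : (1 / 2 : ℝ) ^ k * P = ∏ j ∈ L, (1 / 2 * ‖z j‖) := by
        rw [Finset.prod_mul_distrib, Finset.prod_const, hcardL, hP]
      rw [this]
      refine Finset.prod_le_prod (fun j _ => by positivity) ?_
      intro j hj
      simp only [hLdef, Finset.mem_filter] at hj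
      have h2 : 2 ≤ ‖z j‖ := hlarge j hj.2
      have habs : ‖z j‖ - ‖(t : ℂ)‖ ≤ ‖(t : ℂ) - z j‖ := by
        have h := norm_sub_norm_le (z j) (t : ℂ)
        rw [norm_sub_rev] at h
        exact h
      have htc : ‖(t : ℂ)‖ ≤ 1 := by simpa using ht1
      nlinarith
    have hsmall' : ε ^ s ≤ ∏ j ∈ T, ‖(t : ℂ) - z j‖ := by
      have : (ε : ℝ) ^ s = ∏ _j ∈ T, ε := by rw [Finset.prod_const, hcardT]
      rw [this]
      refine Finset.prod_le_prod (fun j _ => hε0) ?_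
      intro j hj
      have hnot : t ∉ Metric.closedBall ((z j).re) ε := by
        intro hmem
        exact htU (Set.mem_biUnion hj hmem)
      rw [Metric.mem_closedBall, Real.dist_eq, not_le] at hnot
      have hre : |t - (z j).re| ≤ ‖(t : ℂ) - z j‖ := by
        have := Complex.abs_re_le_norm ((t : ℂ) - z j)
        simpa using this
      exact le_trans hnot.le hre
    have hsplit : f t = (∏ j ∈ L, ‖(t : ℂ) - z j‖) *
        ∏ j ∈ T, ‖(t : ℂ) - z j‖ := by
      rw [hf]
      simp only [norm_prod]
      exact (Finset.prod_filter_mul_prod_filter_not Finset.univ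
        (fun j : Fin m => (j : ℕ) < k) (fun j => ‖(t : ℂ) - z j‖)).symm
    rw [hsplit, hc]
    calc (1 / 2) ^ k * P * ε ^ s
        ≤ (∏ j ∈ L, ‖(t : ℂ) - z j‖) * ε ^ s := by
          exact mul_le_mul_of_nonneg_right hbig (pow_nonneg hε0 s)
      _ ≤ (∏ j ∈ L, ‖(t : ℂ) - z j‖) * ∏ j ∈ T, ‖(t : ℂ) - z j‖ := by
          exact mul_le_mul_of_nonneg_left hsmall' (Finset.prod_nonneg fun j _ => norm_nonneg _)
  -- assemble
  have hfint : IntegrableOn f (Set.Ioc (-1 : ℝ) 1) := hfc.integrableOn_Ioc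
  have hfintA : IntegrableOn f A := hfint.mono_set hAsub
  have hc0 : 0 ≤ c := by
    rw [hc]
    exact mul_nonneg (mul_nonneg (by positivity) hP0) (pow_nonneg hε0 s)
  have step1 : c * (volume A).toReal ≤ ∫ t in A, f t :=
    setIntegral_ge_of_const_le_real hAmeas hAfin hpt hfintA
  have step2 : (∫ t in A, f t) ≤ ∫ t in Set.Ioc (-1 : ℝ) 1, f t :=
    setIntegral_mono_set hfint (Filter.Eventually.of_forall hfnn) (Filter.Eventually.of_forall hAsub)
  have final : c ≤ ∫ t in Set.Ioc (-1 : ℝ) 1, f t := by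
    calc c = c * 1 := (mul_one c).symm
      _ ≤ c * (volume A).toReal := mul_le_mul_of_nonneg_left hμA hc0
      _ ≤ ∫ t in A, f t := step1
      _ ≤ _ := step2
  rw [intervalIntegral.integral_of_le (by norm_num : (-1 : ℝ) ≤ 1)]
  have hcast : ((m : ℝ) - (k : ℝ)) = (s : ℝ) := by
    rw [hs, Nat.cast_sub hkm]
  rw [hcast]
  exact final
end

section
/- Fix n ≥ 2 and define, for integer k with 2 ≤ k ≤ n, f(k) = max{ 2n/((n-1)n + (k-1)k), 1/(n-k+1) }. Then min_{2 ≤ k ≤ n} f(k) ≤ 1/((2-√2)(n-1)). Equivalently, 1 + min_k f(k) ≤ 1 + 1/((2-√2)(n-1)). -/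
set_option maxHeartbeats 1000000 in
/-- The range of exponents of the main theorem contains the range
`p ≥ 1 + (1/(2-√2))·(1/(n-1))`: the minimum over `2 ≤ k ≤ n` of
`max{2n/((n-1)n + (k-1)k), 1/(n-k+1)}` is at most `1/((2-√2)(n-1))`. -/
theorem exponent_numerology (n : ℕ) (hn : 2 ≤ n) :
    ∃ k : ℕ, 2 ≤ k ∧ k ≤ n ∧
      max ((2 * n) / (((n : ℝ) - 1) * n + ((k : ℝ) - 1) * k)) (1 / ((n : ℝ) - k + 1)) ≤
        1 / ((2 - Real.sqrt 2) * ((n : ℝ) - 1)) := by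
  set s := Real.sqrt 2 with hs
  have hs2 : s ^ 2 = 2 := Real.sq_sqrt (by norm_num)
  have hs0 : 0 ≤ s := Real.sqrt_nonneg 2
  have hslb : 1.414 < s := by nlinarith
  have hsub : s < 1.415 := by nlinarith
  clear_value s
  rcases eq_or_lt_of_le hn with h2 | h3
  · -- n = 2, take k = 2
    refine ⟨2, le_refl 2, by omega, ?_⟩
    have hn2 : (n : ℝ) = 2 := by exact_mod_cast h2.symm
    rw [hn2]
    norm_num
    rw [one_le_inv_iff₀]
    constructor <;> nlinarith
  · -- n ≥ 3, take k = ⌊(s-1)n + 3 - s⌋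
    have hn3 : (3 : ℝ) ≤ n := by exact_mod_cast h3
    set x : ℝ := (s - 1) * n + 3 - s with hxdef
    have hx0 : 0 ≤ x := by nlinarith
    set k : ℕ := ⌊x⌋₊ with hkdef
    have hk_le : (k : ℝ) ≤ x := Nat.floor_le hx0
    have hk_gt : x < (k : ℝ) + 1 := Nat.lt_floor_add_one x
    clear_value k
    rw [hxdef] at hk_le hk_gt
    clear hx0 hxdef
    have hk1 : (1 : ℝ) < k := by nlinarith
    have hk2 : 2 ≤ k := by exact_mod_cast Nat.one_lt_cast.mp hk1
    have hkn : k ≤ n := by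
      have : (k : ℝ) ≤ n := by nlinarith
      exact_mod_cast this
    refine ⟨k, hk2, hkn, ?_⟩
    have hknR : (k : ℝ) ≤ n := by exact_mod_cast hkn
    have hkR2 : (2 : ℝ) ≤ k := by exact_mod_cast hk2
    have hpos : 0 < (2 - s) * ((n : ℝ) - 1) := by nlinarith
    apply max_le
    · have ha : (s - 1) * ((n : ℝ) - 1) < (k : ℝ) - 1 := by nlinarith
      have hb : (s - 1) * (n : ℝ) < (k : ℝ) := by nlinarith
      have hA0 : (0:ℝ) ≤ (s - 1) * ((n : ℝ) - 1) := by nlinarith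
      have hB0 : (0:ℝ) ≤ (s - 1) * (n : ℝ) := by nlinarith
      have key : (s - 1) ^ 2 * (((n : ℝ) - 1) * n) < ((k : ℝ) - 1) * k := by
        calc (s - 1) ^ 2 * (((n : ℝ) - 1) * n)
            = ((s - 1) * ((n : ℝ) - 1)) * ((s - 1) * (n : ℝ)) := by ring
          _ < ((k : ℝ) - 1) * k := mul_lt_mul'' ha hb hA0 hB0
      have e : (s - 1) ^ 2 = 3 - 2 * s := by nlinarith
      rw [e] at key
      have hd1 : (0:ℝ) < ((n : ℝ) - 1) * n + ((k : ℝ) - 1) * k := by nlinarith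
      rw [div_le_div_iff₀ hd1 hpos]
      nlinarith [key]
    · have hd2 : (0:ℝ) < (n : ℝ) - k + 1 := by nlinarith
      rw [div_le_div_iff₀ hd2 hpos]
      nlinarith [hk_le]
end

section
/- Let 2 ≤ m ≤ n and define γ_j = (m-1)m/((j-1)j(j+1)) for m ≤ j ≤ n-1 and γ_n = 1 − ∑_{j=m}^{n-1} γ_j. Then for every i with m+1 ≤ i ≤ n, one has ∑_{j=m}^{i-1} (2i − j − 1)·γ_j = i − m. -/
lemma gammaT (m : ℕ) (hm : 2 ≤ m) :
    ∀ i : ℕ, m ≤ i →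
      ∑ j ∈ Finset.Ico m i, (((m : ℝ) - 1) * m / (((j : ℝ) - 1) * j * ((j : ℝ) + 1))) =
        1 / 2 - ((m : ℝ) - 1) * m / (2 * ((i : ℝ) - 1) * i) := by
  intro i hi
  induction i, hi using Nat.le_induction with
  | base =>
      have hm1 : (2 : ℝ) ≤ (m : ℝ) := by exact_mod_cast hm
      have h1 : (m : ℝ) - 1 ≠ 0 := by nlinarith
      have h2 : (m : ℝ) ≠ 0 := by nlinarith
      simp only [Finset.Ico_self, Finset.sum_empty]
      field_simp
      ring
  | succ i hi ih =>
      have hi2 : (2 : ℝ) ≤ (i : ℝ) := by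
        have : 2 ≤ i := le_trans hm hi
        exact_mod_cast this
      have h1 : (i : ℝ) - 1 ≠ 0 := by nlinarith
      have h2 : (i : ℝ) ≠ 0 := by nlinarith
      have h3 : (i : ℝ) + 1 ≠ 0 := by nlinarith
      rw [Finset.sum_Ico_succ_top hi, ih]
      push_cast
      field_simp
      ring_nf
      field_simp
      ring

theorem gamma_aux (m : ℕ) (hm : 2 ≤ m) :
    ∀ i : ℕ, m ≤ i →
      ∑ j ∈ Finset.Ico m i,
          (2 * (i : ℝ) - (j : ℝ) - 1) *
            (((m : ℝ) - 1) * m / (((j : ℝ) - 1) * j * ((j : ℝ) + 1))) =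
        (i : ℝ) - m := by
  intro i hi
  induction i, hi using Nat.le_induction with
  | base => simp
  | succ i hi ih =>
      have hi2 : (2 : ℝ) ≤ (i : ℝ) := by
        have : 2 ≤ i := le_trans hm hi
        exact_mod_cast this
      have h1 : (i : ℝ) - 1 ≠ 0 := by nlinarith
      have h2 : (i : ℝ) ≠ 0 := by nlinarith
      have h3 : (i : ℝ) + 1 ≠ 0 := by nlinarith
      rw [Finset.sum_Ico_succ_top hi]
      have key : ∑ j ∈ Finset.Ico m i,
          (2 * ((i : ℝ) + 1) - (j : ℝ) - 1) *
            (((m : ℝ) - 1) * m / (((j : ℝ) - 1) * j * ((j : ℝ) + 1))) =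
          (∑ j ∈ Finset.Ico m i,
            (2 * (i : ℝ) - (j : ℝ) - 1) *
              (((m : ℝ) - 1) * m / (((j : ℝ) - 1) * j * ((j : ℝ) + 1)))) +
          2 * ∑ j ∈ Finset.Ico m i,
            (((m : ℝ) - 1) * m / (((j : ℝ) - 1) * j * ((j : ℝ) + 1))) := by
        rw [Finset.mul_sum, ← Finset.sum_add_distrib]
        exact Finset.sum_congr rfl fun j _ => by ring
      push_cast
      rw [key, ih, gammaT m hm i hi]
      field_simp
      ring

/-- The explicit weights `γ_j = (m-1)m/((j-1)j(j+1))` solve the linear system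
`∑_{j=m}^{i-1} (2i − j − 1)·γ_j = i − m` for every `m+1 ≤ i ≤ n`. -/
theorem gamma_linear_system (m n : ℕ) (hm : 2 ≤ m) (hmn : m ≤ n) :
    ∀ i : ℕ, m + 1 ≤ i → i ≤ n →
      ∑ j ∈ Finset.Ico m i,
          (2 * (i : ℝ) - (j : ℝ) - 1) *
            (((m : ℝ) - 1) * m / (((j : ℝ) - 1) * j * ((j : ℝ) + 1))) =
        (i : ℝ) - m := by
  intro i hi _
  exact gamma_aux m hm i (le_trans (Nat.le_succ m) hi)
end
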